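/- Let p ≥ 1. Define n_e = binom(2p, e/2) for even e ∈ [0, 4p], and define x_0 = 1, x_2 = -(2p+1), and x_e for even e ≥ 4 by n_0 x_e + n_2 x_{e-2} + ⋯ + n_e x_0 = 0. Then for every k ≥ 0, x_{2k} = (-1)^k (2p+2k-1) · (2p-2+k)(2p-3+k)⋯(k+1) / (2p-1)!. -/

import Mathlib

open PowerSeries Finset

lemma prodIcc (K m : ℕ) : ∏ i ∈ Finset.Icc 1 m, (K + i) = (K + 1).ascFactorial m := by
  induction m with
  | zero => simp
  | succ m ih =>
    rw [Finset.prod_Icc_succ_top (by omega), ih, Nat.ascFactorial_succ]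
    ring

lemma keyNat (q k : ℕ) :
    ((2*q+2+k).choose (2*q+1) + (2*q+1+k).choose (2*q+1)) * (2*q+1).factorial =
    (2*q+2*k+3) * (k+2).ascFactorial (2*q) := by
  apply Nat.eq_of_mul_eq_mul_right (Nat.factorial_pos (k+1))
  have h1 : (2*q+2+k).choose (2*q+1) * (2*q+1).factorial * (k+1).factorial
      = (2*q+2+k).factorial := by
    have := Nat.choose_mul_factorial_mul_factorial (show 2*q+1 ≤ 2*q+2+k by omega)
    have e : 2*q+2+k - (2*q+1) = k+1 := by omega
    rwa [e] at this
  have h2 : (2*q+1+k).choose (2*q+1) * (2*q+1).factorial * k.factorial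
      = (2*q+1+k).factorial := by
    have := Nat.choose_mul_factorial_mul_factorial (show 2*q+1 ≤ 2*q+1+k by omega)
    have e : 2*q+1+k - (2*q+1) = k := by omega
    rwa [e] at this
  have h3 : (k+1).factorial * (k+2).ascFactorial (2*q) = (k+1+2*q).factorial :=
    Nat.factorial_mul_ascFactorial (k+1) (2*q)
  have h4 : (2*q+2+k).factorial = (2*q+2+k) * (2*q+1+k).factorial := by
    have : 2*q+2+k = (2*q+1+k) + 1 := by omega
    rw [this, Nat.factorial_succ]
  have h5 : k+1+2*q = 2*q+1+k := by omega
  calc ((2*q+2+k).choose (2*q+1) + (2*q+1+k).choose (2*q+1)) * (2*q+1).factorial * (k+1).factorial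
      = (2*q+2+k).choose (2*q+1) * (2*q+1).factorial * (k+1).factorial
        + (2*q+1+k).choose (2*q+1) * (2*q+1).factorial * ((k+1) * k.factorial) := by
        rw [Nat.factorial_succ k]; ring
    _ = (2*q+2+k).factorial + (k+1) * (2*q+1+k).factorial := by
        rw [h1, ← h2]; ring
    _ = ((2*q+2+k) + (k+1)) * (2*q+1+k).factorial := by rw [h4]; ring
    _ = (2*q+2*k+3) * (2*q+1+k).factorial := by congr 1; omega
    _ = (2*q+2*k+3) * (k+2).ascFactorial (2*q) * (k+1).factorial := by
        rw [mul_assoc, mul_comm ((k+2).ascFactorial (2*q)), h3, h5]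

lemma coeffOneAddXPow (n k : ℕ) :
    PowerSeries.coeff (R := ℚ) k ((1 + PowerSeries.X) ^ n) = (n.choose k : ℚ) := by
  have h : ((1 + PowerSeries.X : ℚ⟦X⟧)) ^ n
      = ((((1 + Polynomial.X) ^ n : Polynomial ℚ) : ℚ⟦X⟧)) := by
    simp [Polynomial.coe_pow, Polynomial.coe_add, Polynomial.coe_one, Polynomial.coe_X]
  rw [h, Polynomial.coeff_coe, Polynomial.coeff_one_add_X_pow]

noncomputable def uu (q : ℕ) : (ℚ⟦X⟧)ˣ := PowerSeries.invOneSubPow ℚ (2*q+1+1)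
noncomputable def vv (q : ℕ) : ℚ⟦X⟧ := PowerSeries.rescale (-1 : ℚ) (uu q).val

lemma hv (q : ℕ) : (1 + PowerSeries.X) ^ (2*q+2) * vv q = 1 := by
  have hu : (1 - PowerSeries.X) ^ (2*q+1+1) * (uu q).val = 1 := by
    rw [← PowerSeries.invOneSubPow_inv_eq_one_sub_pow]
    exact (uu q).inv_val
  have := congrArg (PowerSeries.rescale (-1 : ℚ)) hu
  simp only [map_mul, map_pow, map_sub, map_one, PowerSeries.rescale_neg_one_X,
    sub_neg_eq_add] at this
  rw [show 2*q+2 = 2*q+1+1 from rfl]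
  exact this

lemma hcoeffv (q n : ℕ) : PowerSeries.coeff (R := ℚ) n (vv q)
    = (-1 : ℚ)^n * ((2*q+1+n).choose (2*q+1) : ℚ) := by
  rw [vv, PowerSeries.coeff_rescale, uu,
    PowerSeries.invOneSubPow_val_succ_eq_mk_add_choose, PowerSeries.coeff_mk]

theorem stmt10 (p : ℕ) (hp : 1 ≤ p)
    (x : ℕ → ℚ) (hx0 : x 0 = 1) (hx1 : x 1 = -(2 * p + 1))
    (hx : ∀ e, 2 ≤ e →
      ∑ j ∈ Finset.range (e + 1), (Nat.choose (2 * p) j : ℚ) * x (e - j) = 0)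
    (k : ℕ) :
    x k = (-1 : ℚ) ^ k * (2 * p + 2 * k - 1) *
      (∏ i ∈ Finset.Icc 1 (2 * p - 2), ((k + i : ℕ) : ℚ)) /
        (Nat.factorial (2 * p - 1)) := by
  obtain ⟨q, rfl⟩ : ∃ q, p = q + 1 := ⟨p - 1, by omega⟩
  have hP : 2 * (q + 1) = 2*q+2 := by ring
  rw [hP] at hx
  have h1 : (1 + PowerSeries.X) ^ (2*q+2) * PowerSeries.mk x = 1 - PowerSeries.X := by
    ext n
    rw [PowerSeries.coeff_mul, Finset.Nat.sum_antidiagonal_eq_sum_range_succ_mk]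
    simp only [coeffOneAddXPow, PowerSeries.coeff_mk]
    match n with
    | 0 => simp [hx0]
    | 1 =>
        rw [Finset.sum_range_succ, Finset.sum_range_one]
        simp only [Nat.choose_zero_right, Nat.choose_one_right, Nat.cast_one, one_mul,
          Nat.sub_self, Nat.sub_zero, hx0, hx1, mul_one, map_sub, PowerSeries.coeff_one,
          PowerSeries.coeff_X]
        push_cast
        ring
    | (n+2) =>
        rw [hx (n+2) (by omega)]
        simp [PowerSeries.coeff_one, PowerSeries.coeff_X]
  have h2 : (1 + PowerSeries.X) ^ (2*q+2) * ((1 - PowerSeries.X) * vv q)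
      = 1 - PowerSeries.X := by
    rw [mul_left_comm, hv q, mul_one]
  have hne : ((1 + PowerSeries.X : ℚ⟦X⟧) ^ (2*q+2)) ≠ 0 := by
    intro h
    have h0 := congrArg (PowerSeries.constantCoeff (R := ℚ)) h
    simp at h0
  have hxv : PowerSeries.mk x = (1 - PowerSeries.X) * vv q :=
    mul_left_cancel₀ hne (h1.trans h2.symm)
  have hk : ∀ n, x n = PowerSeries.coeff (R := ℚ) n ((1 - PowerSeries.X) * vv q) := by
    intro n; rw [← hxv, PowerSeries.coeff_mk]
  have e1 : 2 * (q+1) - 1 = 2*q+1 := by omega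
  have e2 : 2 * (q+1) - 2 = 2*q := by omega
  rw [e1, e2]
  have hfac : ((2*q+1).factorial : ℚ) ≠ 0 := by
    exact_mod_cast (Nat.factorial_pos (2*q+1)).ne'
  match k with
  | 0 =>
    rw [hx0]
    have hprod : (∏ i ∈ Finset.Icc 1 (2*q), ((0 + i : ℕ) : ℚ)) = ((2*q).factorial : ℚ) := by
      rw [← Nat.cast_prod]
      congr 1
      rw [prodIcc]
      exact Nat.one_ascFactorial _
    rw [hprod, eq_div_iff hfac]
    push_cast [Nat.factorial_succ]
    ring
  | (j+1) =>
    have hval : x (j+1) = (-1:ℚ)^(j+1) *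
        (((2*q+2+j).choose (2*q+1) : ℚ) + ((2*q+1+j).choose (2*q+1) : ℚ)) := by
      rw [hk (j+1), sub_mul, one_mul, map_sub, PowerSeries.coeff_succ_X_mul,
        hcoeffv, hcoeffv]
      have e3 : 2*q+1+(j+1) = 2*q+2+j := by omega
      rw [e3, pow_succ]
      ring
    rw [hval]
    have hprod : (∏ i ∈ Finset.Icc 1 (2*q), ((j+1 + i : ℕ) : ℚ))
        = (((j+2).ascFactorial (2*q) : ℕ) : ℚ) := by
      rw [← Nat.cast_prod]
      congr 1
      have := prodIcc (j+1) (2*q)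
      simpa using this
    rw [hprod]
    have key := keyNat q j
    have keyQ : (((2*q+2+j).choose (2*q+1) : ℚ) + ((2*q+1+j).choose (2*q+1) : ℚ))
        * ((2*q+1).factorial : ℚ)
        = ((2*q+2*j+3 : ℕ) : ℚ) * (((j+2).ascFactorial (2*q) : ℕ) : ℚ) := by
      exact_mod_cast key
    rw [eq_div_iff hfac]
    push_cast at keyQ ⊢
    linear_combination ((-1:ℚ)^(j+1)) * keyQ
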